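/- Let 0 < α ≤ ∞ and f : (−α, α) → ℝ with f(0) = 0 and f(γ) = 0 for some γ ∈ (0, α), and f not identically zero on (−α, α). Then there exists a positive semidefinite matrix A with entries in (−α, α) such that the matrix f[A] obtained by applying f to every entry of A is not positive semidefinite. -/

import Mathlib

theorem stmt_8 (α : EReal) (hα : 0 < α) (f : ℝ → ℝ)
    (hf0 : f 0 = 0) (γ : ℝ) (hγ0 : 0 < γ) (hγα : (γ : EReal) < α)
    (hfγ : f γ = 0)
    (hfne : ∃ x : ℝ, ((|x| : ℝ) : EReal) < α ∧ f x ≠ 0) :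
    ∃ (n : ℕ) (A : Matrix (Fin n) (Fin n) ℝ), A.PosSemidef ∧
      (∀ i j, ((|A i j| : ℝ) : EReal) < α) ∧
      ¬ (Matrix.of fun i j => f (A i j)).PosSemidef := by
  by_contra hcon
  push_neg at hcon
  obtain ⟨x, hxα, hfx⟩ := hfne
  -- pick a real a with max |x| γ < a < α
  have hmax : ((max |x| γ : ℝ) : EReal) < α := by
    rcases max_cases |x| γ with ⟨h1, _⟩ | ⟨h1, _⟩ <;> rw [h1] <;> assumption
  obtain ⟨a, ha1, ha2⟩ := EReal.exists_between_coe_real hmax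
  have ha1' : max |x| γ < a := EReal.coe_lt_coe_iff.1 ha1
  have hxa : |x| < a := lt_of_le_of_lt (le_max_left _ _) ha1'
  have hγa : γ < a := lt_of_le_of_lt (le_max_right _ _) ha1'
  have ha0 : 0 < a := hγ0.trans hγa
  -- key lemma from the hypothesis hcon
  have key : ∀ p q b : ℝ, 0 ≤ p → 0 ≤ q → (p : EReal) < α → (q : EReal) < α →
      b ^ 2 ≤ p * q → f q = 0 → f b = 0 := by
    intro p q b hp hq hpα hqα hb hfq
    set A : Matrix (Fin 2) (Fin 2) ℝ := Matrix.of ![![p, b], ![b, q]] with hAdef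
    have hA : A.PosSemidef := by
      rw [Matrix.posSemidef_iff_dotProduct_mulVec]
      constructor
      · ext i j; fin_cases i <;> fin_cases j <;> simp [hAdef, Matrix.conjTranspose_apply]
      · intro y
        simp only [hAdef, dotProduct, Matrix.mulVec, Fin.sum_univ_two,
          Pi.star_apply, star_trivial]
        simp
        rcases eq_or_lt_of_le hp with h | h
        · have hb0 : b = 0 := by nlinarith [sq_nonneg b]
          rw [← h, hb0]; nlinarith [mul_nonneg hq (sq_nonneg (y 1))]
        · nlinarith [sq_nonneg (p * y 0 + b * y 1),
            mul_nonneg (sub_nonneg.2 hb) (sq_nonneg (y 1))]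
    have hmpq : ((max p q : ℝ) : EReal) < α := by
      rcases max_cases p q with ⟨h1, _⟩ | ⟨h1, _⟩ <;> rw [h1] <;> assumption
    have hm0 : 0 ≤ max p q := le_trans hp (le_max_left _ _)
    have hbm : |b| ≤ max p q := by
      have hpq : p * q ≤ max p q * max p q :=
        mul_le_mul (le_max_left p q) (le_max_right p q) hq hm0
      nlinarith [sq_abs b, abs_nonneg b]
    have hbα : ((|b| : ℝ) : EReal) < α :=
      lt_of_le_of_lt (EReal.coe_le_coe_iff.2 hbm) hmpq
    have hbounds : ∀ i j, ((|A i j| : ℝ) : EReal) < α := by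
      intro i j
      fin_cases i <;> fin_cases j <;> simp [hAdef] <;>
        first
          | exact hbα
          | (rw [abs_of_nonneg (by assumption)]; assumption)
    have hM := hcon 2 A hA hbounds
    have h1 := hM.dotProduct_mulVec_nonneg ![1, 0]
    have h2 := hM.dotProduct_mulVec_nonneg ![-(f b), f p + 1]
    simp [hAdef, dotProduct, Matrix.mulVec, Fin.sum_univ_two, hfq] at h1 h2
    by_contra hne
    have hfp : 0 ≤ f p := by simpa using h1
    nlinarith [mul_self_pos.2 hne]
  -- the increasing radius of the zero set
  set c : ℝ := γ / a with hcdef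
  have hc0 : 0 < c := div_pos hγ0 ha0
  have hc1 : c < 1 := (div_lt_one ha0).2 hγa
  set r : ℕ → ℝ := fun n => a * c ^ ((1 / 2 : ℝ) ^ n) with hrdef
  have hrpos : ∀ n, 0 < r n := fun n => mul_pos ha0 (Real.rpow_pos_of_pos hc0 _)
  have hrle : ∀ n, r n ≤ a := by
    intro n
    have : c ^ ((1 / 2 : ℝ) ^ n) ≤ 1 :=
      Real.rpow_le_one hc0.le hc1.le (by positivity)
    calc a * c ^ ((1 / 2 : ℝ) ^ n) ≤ a * 1 := by
          exact mul_le_mul_of_nonneg_left this ha0.le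
      _ = a := mul_one a
  have hr0 : r 0 = γ := by
    simp only [hrdef, pow_zero, Real.rpow_one, hcdef]
    field_simp
  have hrec : ∀ n, r (n + 1) * r (n + 1) = a * r n := by
    intro n
    have he : (1 / 2 : ℝ) ^ (n + 1) + (1 / 2 : ℝ) ^ (n + 1) = (1 / 2 : ℝ) ^ n := by
      ring
    simp only [hrdef]
    rw [show a * c ^ ((1/2:ℝ) ^ (n+1)) * (a * c ^ ((1/2:ℝ) ^ (n+1)))
        = a * a * (c ^ ((1/2:ℝ) ^ (n+1)) * c ^ ((1/2:ℝ) ^ (n+1))) by ring,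
      ← Real.rpow_add hc0, he]
    ring
  have H : ∀ n, ∀ b : ℝ, |b| ≤ r n → f b = 0 := by
    intro n
    induction n with
    | zero =>
      intro b hb
      rw [hr0] at hb
      exact key γ γ b hγ0.le hγ0.le hγα hγα (by nlinarith [sq_abs b, abs_nonneg b]) hfγ
    | succ n ih =>
      intro b hb
      have hb2 : b ^ 2 ≤ a * r n := by
        rw [← hrec n]
        nlinarith [sq_abs b, abs_nonneg b, (hrpos (n + 1)).le]
      set q : ℝ := b ^ 2 / a with hqdef
      have hq0 : 0 ≤ q := by positivity
      have hqr : q ≤ r n := (div_le_iff₀' ha0).2 hb2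
      have hfq : f q = 0 := ih q (by rwa [abs_of_nonneg hq0])
      have hqα : (q : EReal) < α :=
        lt_of_le_of_lt (EReal.coe_le_coe_iff.2 (hqr.trans (hrle n))) ha2
      refine key a q b ha0.le hq0 ha2 hqα ?_ hfq
      rw [hqdef, mul_div_cancel₀ _ ha0.ne']
  -- limit of r n is a > |x|
  have hlim : Filter.Tendsto r Filter.atTop (nhds a) := by
    have h1 : Filter.Tendsto (fun n : ℕ => (1 / 2 : ℝ) ^ n) Filter.atTop (nhds 0) :=
      tendsto_pow_atTop_nhds_zero_of_lt_one (by norm_num) (by norm_num)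
    have h2 : Filter.Tendsto (fun n : ℕ => c ^ ((1 / 2 : ℝ) ^ n)) Filter.atTop
        (nhds 1) := by
      have := (Real.continuousAt_const_rpow (b := (0:ℝ)) hc0.ne').tendsto.comp h1
      simpa [Real.rpow_zero, Function.comp_def] using this
    have := h2.const_mul a
    simpa [hrdef] using this
  have hev : ∀ᶠ n in Filter.atTop, |x| < r n := hlim.eventually (eventually_gt_nhds hxa)
  obtain ⟨n, hn⟩ := hev.exists
  exact hfx (H n x hn.le)
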